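/- Fix l ≥ 2, 1 ≤ h ≤ l − 1, and a correct key k* : Fin l → Bool. Then for every key k with HD(k*,k) = 2, the number of l-bit words i such that exactly one of HD(i,k*) = h and HD(i,k) = h holds equals 2·(C(l,h) − 2·C(l−2,h−1)); consequently the minimum, over all incorrect keys k ≠ k*, of the per-key error count is at most 2·(C(l,h) − 2·C(l−2,h−1)). -/

import Mathlib

/-- Hamming distance between `l`-bit words. -/
def HD {l : ℕ} (a b : Fin l → Bool) : ℕ :=
  (Finset.univ.filter (fun j => a j ≠ b j)).card

section SfllAux

open Finset
open scoped symmDiff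

lemma key_filter {l : ℕ} (c : Fin l → Bool) (S : Finset (Fin l)) :
    (univ.filter fun m => (if m ∈ S then !(c m) else c m) ≠ c m) = S := by
  ext m
  by_cases hm : m ∈ S <;> simp [hm]

lemma transfer {l : ℕ} (c : Fin l → Bool) (P : Finset (Fin l) → Prop) [DecidablePred P] :
    (univ.filter fun i : Fin l → Bool => P (univ.filter fun j => i j ≠ c j)).card
      = (univ.filter P).card := by
  refine Finset.card_bij' (fun i _ => univ.filter fun j => i j ≠ c j)
    (fun S _ => fun m => if m ∈ S then !(c m) else c m) ?_ ?_ ?_ ?_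
  · intro a ha
    simp only [mem_filter, mem_univ, true_and] at ha ⊢
    exact ha
  · intro S hS
    simp only [mem_filter, mem_univ, true_and] at hS ⊢
    rw [key_filter]; exact hS
  · intro a _
    funext m
    by_cases hm : a m ≠ c m <;> simp only [mem_filter, mem_univ, true_and, hm, if_true, if_false, if_pos, if_neg]
    · revert hm; cases a m <;> cases c m <;> simp
    · revert hm; cases a m <;> cases c m <;> simp
  · intro S _
    exact key_filter c S

lemma sd_filter {l : ℕ} (kstar k i : Fin l → Bool) :
    (univ.filter fun j => i j ≠ k j)
      = (univ.filter fun j => i j ≠ kstar j) ∆ (univ.filter fun j => kstar j ≠ k j) := by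
  ext j
  simp only [Finset.mem_symmDiff, mem_filter, mem_univ, true_and]
  cases h1 : i j <;> cases h2 : kstar j <;> cases h3 : k j <;> simp

lemma card_symmDiff_aux {α : Type*} [DecidableEq α] (s t : Finset α) :
    (s ∆ t).card + (s ∩ t).card + (t ∩ s).card = s.card + t.card := by
  have h1 : (s ∆ t).card = (s \ t).card + (t \ s).card := by
    rw [symmDiff_def]
    exact Finset.card_union_of_disjoint disjoint_sdiff_sdiff
  have h2 := Finset.card_sdiff_add_card_inter s t
  have h3 := Finset.card_sdiff_add_card_inter t s
  omega

lemma sphere_count {l : ℕ} (m : ℕ) :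
    (univ.filter fun S : Finset (Fin l) => S.card = m).card = l.choose m := by
  have : (univ.filter fun S : Finset (Fin l) => S.card = m)
      = Finset.powersetCard m univ := by
    ext S; simp [Finset.mem_powersetCard]
  rw [this, Finset.card_powersetCard, card_univ, Fintype.card_fin]

lemma one_in {l h : ℕ} (hh1 : 1 ≤ h) (p q : Fin l) (hpq : p ≠ q) :
    (univ.filter fun S : Finset (Fin l) => S.card = h ∧ p ∈ S ∧ q ∉ S).card
      = (l - 2).choose (h - 1) := by
  have hcard : (((univ : Finset (Fin l)).erase p).erase q).card = l - 2 := by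
    rw [Finset.card_erase_of_mem (by simp [hpq.symm]), Finset.card_erase_of_mem (by simp),
      card_univ, Fintype.card_fin]
    omega
  have : (univ.filter fun S : Finset (Fin l) => S.card = h ∧ p ∈ S ∧ q ∉ S).card
      = (Finset.powersetCard (h - 1) (((univ : Finset (Fin l)).erase p).erase q)).card := by
    refine Finset.card_bij' (fun S _ => S.erase p) (fun T _ => insert p T) ?_ ?_ ?_ ?_
    · intro S hS
      simp only [mem_filter, mem_univ, true_and] at hS
      obtain ⟨hc, hp, hq⟩ := hS
      rw [Finset.mem_powersetCard]
      constructor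
      · intro j hj
        simp only [Finset.mem_erase] at hj ⊢
        exact ⟨fun hjq => hq (hjq ▸ hj.2), hj.1, Finset.mem_univ j⟩
      · rw [Finset.card_erase_of_mem hp, hc]
    · intro T hT
      rw [Finset.mem_powersetCard] at hT
      obtain ⟨hsub, hc⟩ := hT
      have hpT : p ∉ T := fun hp => by
        have := hsub hp; simp at this
      have hqT : q ∉ T := fun hq => by
        have := hsub hq; simp [hpq.symm] at this
      simp only [mem_filter, mem_univ, true_and]
      refine ⟨?_, Finset.mem_insert_self _ _, ?_⟩
      · rw [Finset.card_insert_of_notMem hpT, hc]; omega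
      · simp [hpq.symm, hqT]
    · intro S hS
      simp only [mem_filter, mem_univ, true_and] at hS
      exact Finset.insert_erase hS.2.1
    · intro T hT
      rw [Finset.mem_powersetCard] at hT
      have hpT : p ∉ T := fun hp => by
        have := hT.1 hp; simp at this
      exact Finset.erase_insert hpT
  rw [this, Finset.card_powersetCard, hcard]

lemma inter_count {l h : ℕ} (hh1 : 1 ≤ h) (p q : Fin l) (hpq : p ≠ q) :
    (univ.filter fun S : Finset (Fin l) => S.card = h ∧ (S ∆ ({p, q} : Finset (Fin l))).card = h).card
      = 2 * (l - 2).choose (h - 1) := by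
  have key : ∀ S : Finset (Fin l),
      (S.card = h ∧ (S ∆ ({p, q} : Finset (Fin l))).card = h)
        ↔ (S.card = h ∧ ((p ∈ S ∧ q ∉ S) ∨ (q ∈ S ∧ p ∉ S))) := by
    intro S
    constructor
    · rintro ⟨hc, hsd⟩
      refine ⟨hc, ?_⟩
      have haux := card_symmDiff_aux S ({p, q} : Finset (Fin l))
      rw [Finset.inter_comm ({p,q} : Finset (Fin l)) S] at haux
      rw [Finset.card_pair hpq, hc, hsd] at haux
      by_cases hp : p ∈ S <;> by_cases hq : q ∈ S
      · exfalso
        have hint : S ∩ ({p, q} : Finset (Fin l)) = {p, q} := by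
          rw [Finset.inter_eq_right]
          intro j hj; simp only [Finset.mem_insert, Finset.mem_singleton] at hj
          rcases hj with rfl | rfl <;> assumption
        rw [hint, Finset.card_pair hpq] at haux
        omega
      · left
        exact ⟨hp, hq⟩
      · right
        exact ⟨hq, hp⟩
      · exfalso
        have hint : S ∩ ({p, q} : Finset (Fin l)) = ∅ := by
          ext j; simp only [Finset.mem_inter, Finset.mem_insert, Finset.mem_singleton,
            Finset.notMem_empty, iff_false]
          rintro ⟨hj, rfl | rfl⟩ <;> [exact hp hj; exact hq hj]
        rw [hint, Finset.card_empty] at haux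
        omega
    · rintro ⟨hc, hone⟩
      refine ⟨hc, ?_⟩
      have haux := card_symmDiff_aux S ({p, q} : Finset (Fin l))
      rw [Finset.inter_comm ({p,q} : Finset (Fin l)) S] at haux
      rw [Finset.card_pair hpq, hc] at haux
      have hint : S ∩ ({p, q} : Finset (Fin l)) = {p} ∨ S ∩ ({p, q} : Finset (Fin l)) = {q} := by
        rcases hone with ⟨hp, hq⟩ | ⟨hq, hp⟩
        · left; ext j
          simp only [Finset.mem_inter, Finset.mem_insert, Finset.mem_singleton]
          constructor
          · rintro ⟨hj, rfl | rfl⟩; · rfl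
            exact absurd hj hq
          · rintro rfl; exact ⟨hp, Or.inl rfl⟩
        · right; ext j
          simp only [Finset.mem_inter, Finset.mem_insert, Finset.mem_singleton]
          constructor
          · rintro ⟨hj, rfl | rfl⟩; · exact absurd hj hp
            rfl
          · rintro rfl; exact ⟨hq, Or.inr rfl⟩
      rcases hint with hint | hint <;> rw [hint, Finset.card_singleton] at haux <;> omega
  rw [Finset.filter_congr (fun S _ => key S)]
  have hsplit : (univ.filter fun S : Finset (Fin l) =>
        S.card = h ∧ ((p ∈ S ∧ q ∉ S) ∨ (q ∈ S ∧ p ∉ S)))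
      = (univ.filter fun S : Finset (Fin l) => S.card = h ∧ p ∈ S ∧ q ∉ S)
        ∪ (univ.filter fun S : Finset (Fin l) => S.card = h ∧ q ∈ S ∧ p ∉ S) := by
    ext S
    simp only [mem_filter, mem_univ, true_and, Finset.mem_union]
    tauto
  rw [hsplit, Finset.card_union_of_disjoint, one_in hh1 p q hpq, one_in hh1 q p hpq.symm]
  · ring
  · rw [Finset.disjoint_left]
    intro S hS1 hS2
    simp only [mem_filter, mem_univ, true_and] at hS1 hS2
    exact hS1.2.2 hS2.2.1

/-- SFLL-HD: every key `k` at Hamming distance `2` from `k*` errs on exactly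
`2·(C(l,h) − 2·C(l−2,h−1))` inputs; hence the minimum per-key error count over
incorrect keys is at most this value. -/
theorem sfll_hd_min_error_upper_bound {l : ℕ} (hl : 2 ≤ l) (h : ℕ)
    (hh1 : 1 ≤ h) (hh2 : h ≤ l - 1) (kstar : Fin l → Bool) :
    (∀ k : Fin l → Bool, HD kstar k = 2 →
      (Finset.univ.filter (fun i : Fin l → Bool =>
        Xor (HD i kstar = h) (HD i k = h))).card
        = 2 * (l.choose h - 2 * (l - 2).choose (h - 1))) ∧
    sInf {c : ℕ | ∃ k : Fin l → Bool, k ≠ kstar ∧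
        c = (Finset.univ.filter (fun i : Fin l → Bool =>
          Xor (HD i kstar = h) (HD i k = h))).card}
      ≤ 2 * (l.choose h - 2 * (l - 2).choose (h - 1)) := by
  have main : ∀ k : Fin l → Bool, HD kstar k = 2 →
      (Finset.univ.filter (fun i : Fin l → Bool =>
        Xor (HD i kstar = h) (HD i k = h))).card
        = 2 * (l.choose h - 2 * (l - 2).choose (h - 1)) := by
    intro k hk
    set D : Finset (Fin l) := univ.filter (fun j => kstar j ≠ k j) with hDdef
    have hD2 : D.card = 2 := hk
    obtain ⟨p, q, hpq, hDeq⟩ := Finset.card_eq_two.mp hD2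
    have hHDk : ∀ i : Fin l → Bool,
        HD i k = ((univ.filter fun j => i j ≠ kstar j) ∆ D).card := by
      intro i
      rw [HD, hDdef, sd_filter kstar k i]
    have hmain : (Finset.univ.filter (fun i : Fin l → Bool =>
          Xor (HD i kstar = h) (HD i k = h)))
        = univ.filter (fun i : Fin l → Bool =>
            (fun S : Finset (Fin l) => Xor (S.card = h) ((S ∆ D).card = h))
              (univ.filter fun j => i j ≠ kstar j)) := by
      apply Finset.filter_congr
      intro i _
      rw [show HD i kstar = (univ.filter fun j => i j ≠ kstar j).card from rfl, hHDk i]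
    rw [hmain, transfer kstar (fun S : Finset (Fin l) => Xor (S.card = h) ((S ∆ D).card = h))]
    -- now over finsets
    set A : Finset (Finset (Fin l)) := univ.filter fun S => S.card = h with hA
    set B : Finset (Finset (Fin l)) := univ.filter fun S => (S ∆ D).card = h with hB
    have hxor : (univ.filter fun S : Finset (Fin l) =>
          Xor (S.card = h) ((S ∆ D).card = h)) = A ∆ B := by
      ext S
      simp only [hA, hB, Finset.mem_symmDiff, mem_filter, mem_univ, true_and]
      exact Iff.rfl
    rw [hxor]
    have hCA : A.card = l.choose h := sphere_count h
    have hCB : B.card = l.choose h := by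
      rw [← hCA]
      refine Finset.card_bij' (fun S _ => S ∆ D) (fun S _ => S ∆ D) ?_ ?_ ?_ ?_
      · intro S hS
        simp only [hA, hB, mem_filter, mem_univ, true_and] at hS ⊢
        exact hS
      · intro S hS
        simp only [hA, hB, mem_filter, mem_univ, true_and] at hS ⊢
        rwa [symmDiff_symmDiff_cancel_right]
      · intro S _; exact symmDiff_symmDiff_cancel_right D S
      · intro S _; exact symmDiff_symmDiff_cancel_right D S
    have hI : (A ∩ B).card = 2 * (l - 2).choose (h - 1) := by
      have : A ∩ B = univ.filter fun S : Finset (Fin l) =>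
          S.card = h ∧ (S ∆ ({p, q} : Finset (Fin l))).card = h := by
        rw [hA, hB, ← Finset.filter_and, hDeq]
      rw [this, inter_count hh1 p q hpq]
    have haux := card_symmDiff_aux A B
    have hIle : (A ∩ B).card ≤ A.card := Finset.card_le_card (Finset.inter_subset_left)
    rw [Finset.inter_comm B A] at haux
    omega
  refine ⟨main, ?_⟩
  have hl0 : 0 < l := by omega
  have hl1 : 1 < l := by omega
  set p0 : Fin l := ⟨0, hl0⟩
  set p1 : Fin l := ⟨1, hl1⟩
  have hp01 : p0 ≠ p1 := by
    simp only [p0, p1, Fin.mk.injEq, ne_eq]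
    omega
  set k0 : Fin l → Bool := fun j => if j = p0 ∨ j = p1 then !(kstar j) else kstar j with hk0
  have hHD2 : HD kstar k0 = 2 := by
    have hfe : (univ.filter fun j => kstar j ≠ k0 j) = {p0, p1} := by
      ext j
      simp only [mem_filter, mem_univ, true_and, Finset.mem_insert, Finset.mem_singleton]
      by_cases hj : j = p0 ∨ j = p1 <;> simp [k0, hj]
    rw [HD, hfe, Finset.card_pair hp01]
  have hne : k0 ≠ kstar := by
    intro heq
    have := congrFun heq p0
    simp [k0] at this
  calc sInf {c : ℕ | ∃ k : Fin l → Bool, k ≠ kstar ∧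
        c = (Finset.univ.filter (fun i : Fin l → Bool =>
          Xor (HD i kstar = h) (HD i k = h))).card}
      ≤ (Finset.univ.filter (fun i : Fin l → Bool =>
          Xor (HD i kstar = h) (HD i k0 = h))).card := Nat.sInf_le ⟨k0, hne, rfl⟩
    _ = 2 * (l.choose h - 2 * (l - 2).choose (h - 1)) := main k0 hHD2

end SfllAux
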